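/- Let n ≥ 3 and let A be the complex algebra with basis e_1, e_2, …, e_n and multiplication e_i ⋄ e_j = (i/(j+1))·e_{i+j} if i+j ≤ n and e_i ⋄ e_j = 0 otherwise (the algebra IDD(K^1_n, 1, −1)). Then Der(A) is the three-dimensional linear span of the derivations φ, ϕ_1, ϕ_2 defined on the basis by: φ(e_i) = i·e_i for 1 ≤ i ≤ n; ϕ_1(e_1) = n·e_{n−1}, ϕ_1(e_2) = (n²−n+2)·e_n, and ϕ_1(e_k) = 0 for k ≥ 3; ϕ_2(e_1) = e_n and ϕ_2(e_k) = 0 for k ≥ 2. -/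

import Mathlib

/-- The basis index set `{1, …, n}`. -/
abbrev Ix (n : ℕ) := ↥(Finset.Icc 1 n)

/-- The vector space with basis `e_1, …, e_n`; the `p`-th coordinate of a vector is its
coefficient at `e_p` (so `e_i = Pi.single i 1`). -/
abbrev V (n : ℕ) := Ix n → ℂ

/-- The multiplication of `IDD(K^1_n, 1, −1)`: `e_i ⋄ e_j = (i/(j+1))·e_{i+j}` if `i+j ≤ n` and `0` otherwise. -/
noncomputable def mulA (n : ℕ) (x y : V n) : V n := fun p =>
  ∑ i : Ix n, ∑ j : Ix n, x i * y j * (if i.1 + j.1 = p.1 then (i.1 : ℂ) * ((j.1 : ℂ) + 1)⁻¹ else 0)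

/-- `D` is a derivation of `IDD(K^1_n, 1, −1)`. -/
def IsDer (n : ℕ) (D : V n →ₗ[ℂ] V n) : Prop :=
  ∀ x y, D (mulA n x y) = mulA n (D x) y + mulA n x (D y)

/-- The derivation `φ(e_i) = i·e_i`. -/
noncomputable def phiD (n : ℕ) : V n →ₗ[ℂ] V n :=
  Matrix.mulVecLin (fun p s : Ix n => if p = s then (s.1 : ℂ) else 0)

/-- The derivation `ϕ_1(e_1) = n·e_{n−1}`, `ϕ_1(e_2) = (n²−n+2)·e_n`, and `ϕ_1(e_k) = 0` for `k ≥ 3`. -/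
noncomputable def phi1D (n : ℕ) : V n →ₗ[ℂ] V n :=
  Matrix.mulVecLin (fun p s : Ix n => if s.1 = 1 ∧ p.1 = n - 1 then (n : ℂ) else if s.1 = 2 ∧ p.1 = n then (n : ℂ) ^ 2 - (n : ℂ) + 2 else 0)

/-- The derivation `ϕ_2(e_1) = e_n`, `ϕ_2(e_k) = 0` for `k ≥ 2`. -/
noncomputable def phi2D (n : ℕ) : V n →ₗ[ℂ] V n :=
  Matrix.mulVecLin (fun p s : Ix n => if s.1 = 1 ∧ p.1 = n then 1 else 0)



noncomputable def eV (n : ℕ) (s : Ix n) : V n := Pi.single s 1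

noncomputable def ent (n : ℕ) (D : V n →ₗ[ℂ] V n) (p s : ℕ) : ℂ :=
  if hp : p ∈ Finset.Icc 1 n then
    if hs : s ∈ Finset.Icc 1 n then D (eV n ⟨s, hs⟩) ⟨p, hp⟩ else 0
  else 0

lemma ent_eq {n : ℕ} (D : V n →ₗ[ℂ] V n) (p s : Ix n) :
    ent n D p.1 s.1 = D (eV n s) p := by
  simp [ent, p.2, s.2]

lemma ent_out {n : ℕ} (D : V n →ₗ[ℂ] V n) (p s : ℕ)
    (h : ¬(1 ≤ p ∧ p ≤ n) ∨ ¬(1 ≤ s ∧ s ≤ n)) : ent n D p s = 0 := by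
  unfold ent
  rcases h with h | h <;> [skip; rcases Decidable.em (p ∈ Finset.Icc 1 n) with hp | hp] <;>
    simp_all [Finset.mem_Icc]

lemma eV_apply {n : ℕ} (s p : Ix n) : eV n s p = if p = s then 1 else 0 := by
  simp [eV, Pi.single_apply]

lemma mulA_single {n : ℕ} (x : V n) (j p : Ix n) :
    mulA n x (eV n j) p = ∑ i : Ix n, x i * (if i.1 + j.1 = p.1 then (i.1 : ℂ) * ((j.1 : ℂ) + 1)⁻¹ else 0) := by
  unfold mulA
  refine Finset.sum_congr rfl fun i _ => ?_
  rw [Finset.sum_eq_single j]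
  · rw [eV_apply]; simp
  · intro b _ hb; rw [eV_apply]; simp [hb]
  · simp

lemma mulA_single_left {n : ℕ} (y : V n) (i p : Ix n) :
    mulA n (eV n i) y p = ∑ j : Ix n, y j * (if i.1 + j.1 = p.1 then (i.1 : ℂ) * ((j.1 : ℂ) + 1)⁻¹ else 0) := by
  unfold mulA
  rw [Finset.sum_eq_single i]
  · refine Finset.sum_congr rfl fun j _ => ?_
    rw [eV_apply]; simp
  · intro b _ hb
    refine Finset.sum_eq_zero fun j _ => ?_
    rw [eV_apply]; simp [hb]
  · simp

lemma keyB {n : ℕ} (D : V n →ₗ[ℂ] V n) (i j p : Ix n) :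
    mulA n (D (eV n i)) (eV n j) p
      = ((p.1 - j.1 : ℕ) : ℂ) * ((j.1 : ℂ) + 1)⁻¹ * ent n D (p.1 - j.1) i.1 := by
  rw [mulA_single]
  by_cases hj : j.1 < p.1
  · have hm : p.1 - j.1 ∈ Finset.Icc 1 n := by
      have := p.2; have := j.2; simp only [Finset.mem_Icc] at *; omega
    rw [Finset.sum_eq_single (⟨p.1 - j.1, hm⟩ : Ix n)]
    · rw [← ent_eq]
      simp only []
      rw [if_pos (by omega)]
      ring
    · intro b _ hb
      rw [if_neg (fun h => hb (Subtype.ext (show b.1 = p.1 - j.1 by omega)))]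
      ring
    · simp
  · have h0 : p.1 - j.1 = 0 := by omega
    rw [h0]
    rw [Finset.sum_eq_zero]
    · simp
    · intro b _
      have := b.2; simp only [Finset.mem_Icc] at this
      rw [if_neg (by omega)]
      ring

lemma keyC {n : ℕ} (D : V n →ₗ[ℂ] V n) (i j p : Ix n) :
    mulA n (eV n i) (D (eV n j)) p
      = (i.1 : ℂ) * (((p.1 - i.1 : ℕ) : ℂ) + 1)⁻¹ * ent n D (p.1 - i.1) j.1 := by
  rw [mulA_single_left]
  by_cases hi : i.1 < p.1
  · have hm : p.1 - i.1 ∈ Finset.Icc 1 n := by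
      have := p.2; have := i.2; simp only [Finset.mem_Icc] at *; omega
    rw [Finset.sum_eq_single (⟨p.1 - i.1, hm⟩ : Ix n)]
    · rw [← ent_eq]
      simp only []
      rw [if_pos (by omega)]
      ring
    · intro b _ hb
      rw [if_neg (fun h => hb (Subtype.ext (show b.1 = p.1 - i.1 by omega)))]
      ring
    · simp
  · have h0 : p.1 - i.1 = 0 := by omega
    rw [h0, ent_out D 0 j.1 (Or.inl (by omega))]
    rw [Finset.sum_eq_zero]
    · simp
    · intro b _
      have := b.2; simp only [Finset.mem_Icc] at this
      rw [if_neg (by omega)]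
      ring

lemma mulA_eV_eV {n : ℕ} (i j : Ix n) :
    mulA n (eV n i) (eV n j)
      = ((i.1 : ℂ) * ((j.1 : ℂ) + 1)⁻¹) •
        (if h : i.1 + j.1 ∈ Finset.Icc 1 n then eV n ⟨i.1 + j.1, h⟩ else 0) := by
  funext p
  rw [mulA_single_left]
  split
  · next h =>
    rw [Finset.sum_eq_single j]
    · rw [eV_apply, Pi.smul_apply, eV_apply]
      by_cases hp : i.1 + j.1 = p.1
      · rw [if_pos hp, if_pos rfl, if_pos (Subtype.ext hp.symm)]; simp
      · rw [if_neg hp, if_neg (show ¬ p = ⟨i.1 + j.1, h⟩ from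
            fun hh => hp (congrArg Subtype.val hh).symm)]
        simp
    · intro b _ hb; rw [eV_apply, if_neg hb]; ring
    · simp
  · next h =>
    rw [Finset.sum_eq_zero]
    · simp
    · intro b _
      have hi := i.2
      have hj := j.2
      have hp := p.2
      simp only [Finset.mem_Icc] at hi hj hp h
      have hlt : n < i.1 + j.1 := by omega
      rw [eV_apply]
      by_cases hb : b = j
      · rw [hb, if_pos rfl, if_neg (by omega)]
        ring
      · rw [if_neg hb]
        ring

lemma keyA {n : ℕ} (D : V n →ₗ[ℂ] V n) (i j p : Ix n) :
    D (mulA n (eV n i) (eV n j)) p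
      = (i.1 : ℂ) * ((j.1 : ℂ) + 1)⁻¹ * ent n D p.1 (i.1 + j.1) := by
  rw [mulA_eV_eV, map_smul]
  split
  · next h =>
    rw [Pi.smul_apply, smul_eq_mul, ← ent_eq]
  · next h =>
    rw [map_zero, ent_out D p.1 _ (Or.inr (by simp only [Finset.mem_Icc] at h; omega))]
    simp

lemma mulA_add_left {n : ℕ} (x x' y : V n) :
    mulA n (x + x') y = mulA n x y + mulA n x' y := by
  funext p
  simp only [mulA, Pi.add_apply, ← Finset.sum_add_distrib]
  refine Finset.sum_congr rfl fun i _ => ?_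
  refine Finset.sum_congr rfl fun j _ => ?_
  ring

lemma mulA_smul_left {n : ℕ} (c : ℂ) (x y : V n) :
    mulA n (c • x) y = c • mulA n x y := by
  funext p
  simp only [mulA, Pi.smul_apply, smul_eq_mul, Finset.mul_sum]
  refine Finset.sum_congr rfl fun i _ => ?_
  refine Finset.sum_congr rfl fun j _ => ?_
  ring

lemma mulA_add_right {n : ℕ} (x y y' : V n) :
    mulA n x (y + y') = mulA n x y + mulA n x y' := by
  funext p
  simp only [mulA, Pi.add_apply, ← Finset.sum_add_distrib]
  refine Finset.sum_congr rfl fun i _ => ?_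
  refine Finset.sum_congr rfl fun j _ => ?_
  ring

lemma mulA_smul_right {n : ℕ} (c : ℂ) (x y : V n) :
    mulA n x (c • y) = c • mulA n x y := by
  funext p
  simp only [mulA, Pi.smul_apply, smul_eq_mul, Finset.mul_sum]
  refine Finset.sum_congr rfl fun i _ => ?_
  refine Finset.sum_congr rfl fun j _ => ?_
  ring

noncomputable def mulL (n : ℕ) : V n →ₗ[ℂ] V n →ₗ[ℂ] V n :=
  LinearMap.mk₂ ℂ (mulA n) mulA_add_left mulA_smul_left mulA_add_right mulA_smul_right

def MasterEq (n : ℕ) (D : V n →ₗ[ℂ] V n) : Prop :=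
  ∀ i j p : ℕ, 1 ≤ i → i ≤ n → 1 ≤ j → j ≤ n → 1 ≤ p → p ≤ n →
    (i : ℂ) * ((j : ℂ) + 1)⁻¹ * ent n D p (i + j)
      = ((p - j : ℕ) : ℂ) * ((j : ℂ) + 1)⁻¹ * ent n D (p - j) i
        + (i : ℂ) * (((p - i : ℕ) : ℂ) + 1)⁻¹ * ent n D (p - i) j

lemma isDer_iff {n : ℕ} (D : V n →ₗ[ℂ] V n) : IsDer n D ↔ MasterEq n D := by
  constructor
  · intro hD i j p hi1 hi2 hj1 hj2 hp1 hp2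
    have hi : i ∈ Finset.Icc 1 n := by simp [Finset.mem_Icc]; omega
    have hj : j ∈ Finset.Icc 1 n := by simp [Finset.mem_Icc]; omega
    have hp : p ∈ Finset.Icc 1 n := by simp [Finset.mem_Icc]; omega
    have h := congrFun (hD (eV n ⟨i, hi⟩) (eV n ⟨j, hj⟩)) ⟨p, hp⟩
    rw [keyA] at h
    rw [Pi.add_apply, keyB, keyC] at h
    exact h
  · intro hM x y
    have hbil : ((mulL n).compr₂ D) = (mulL n).comp D + (mulL n).compl₂ D := by
      apply LinearMap.ext_basis (Pi.basisFun ℂ (Ix n)) (Pi.basisFun ℂ (Ix n))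
      intro i j
      have hei : (Pi.basisFun ℂ (Ix n)) i = eV n i := by
        simp [Pi.basisFun_apply, eV]
      have hej : (Pi.basisFun ℂ (Ix n)) j = eV n j := by
        simp [Pi.basisFun_apply, eV]
      rw [hei, hej]
      simp only [LinearMap.compr₂_apply, LinearMap.comp_apply, LinearMap.add_apply,
        LinearMap.compl₂_apply, LinearMap.mk₂_apply, mulL]
      funext p
      rw [keyA, Pi.add_apply, keyB, keyC]
      have hi := i.2; have hj := j.2; have hp := p.2
      simp only [Finset.mem_Icc] at hi hj hp
      exact hM i.1 j.1 p.1 hi.1 hi.2 hj.1 hj.2 hp.1 hp.2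
    simpa [mulL, LinearMap.compr₂_apply, LinearMap.compl₂_apply] using
      DFunLike.congr_fun (DFunLike.congr_fun hbil x) y

lemma ent_mulVecLin {n : ℕ} (M : Matrix (Ix n) (Ix n) ℂ) (p s : ℕ)
    (hp : p ∈ Finset.Icc 1 n) (hs : s ∈ Finset.Icc 1 n) :
    ent n (Matrix.mulVecLin M) p s = M ⟨p, hp⟩ ⟨s, hs⟩ := by
  unfold ent
  rw [dif_pos hp, dif_pos hs]
  simp [eV, Matrix.mulVecLin_apply, Matrix.mulVec_single]

lemma ent_phiD {n : ℕ} (p s : ℕ) :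
    ent n (phiD n) p s = if p = s ∧ 1 ≤ s ∧ s ≤ n then (s : ℂ) else 0 := by
  by_cases hp : p ∈ Finset.Icc 1 n
  · by_cases hs : s ∈ Finset.Icc 1 n
    · erw [phiD, ent_mulVecLin _ p s hp hs]
      simp only [Finset.mem_Icc] at hp hs
      by_cases h : p = s
      · rw [if_pos (Subtype.ext h), if_pos ⟨h, hs⟩]
      · rw [if_neg (fun hh => h (congrArg Subtype.val hh)), if_neg (by tauto)]
    · simp only [Finset.mem_Icc] at hs
      rw [ent_out _ _ _ (Or.inr hs), if_neg (by tauto)]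
  · simp only [Finset.mem_Icc] at hp
    rw [ent_out _ _ _ (Or.inl hp), if_neg (by omega)]

lemma ent_phi1D {n : ℕ} (hn : 3 ≤ n) (p s : ℕ) :
    ent n (phi1D n) p s = if s = 1 ∧ p = n - 1 then (n : ℂ)
      else if s = 2 ∧ p = n then (n : ℂ) ^ 2 - (n : ℂ) + 2 else 0 := by
  by_cases hp : p ∈ Finset.Icc 1 n
  · by_cases hs : s ∈ Finset.Icc 1 n
    · erw [phi1D, ent_mulVecLin _ p s hp hs]
    · simp only [Finset.mem_Icc] at hs
      rw [ent_out _ _ _ (Or.inr hs), if_neg (by omega), if_neg (by omega)]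
  · simp only [Finset.mem_Icc] at hp
    rw [ent_out _ _ _ (Or.inl hp), if_neg (by omega), if_neg (by omega)]

lemma ent_phi2D {n : ℕ} (hn : 3 ≤ n) (p s : ℕ) :
    ent n (phi2D n) p s = if s = 1 ∧ p = n then 1 else 0 := by
  by_cases hp : p ∈ Finset.Icc 1 n
  · by_cases hs : s ∈ Finset.Icc 1 n
    · erw [phi2D, ent_mulVecLin _ p s hp hs]
    · simp only [Finset.mem_Icc] at hs
      rw [ent_out _ _ _ (Or.inr hs), if_neg (by omega)]
  · simp only [Finset.mem_Icc] at hp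
    rw [ent_out _ _ _ (Or.inl hp), if_neg (by omega)]

lemma isDer_phiD {n : ℕ} (hn : 3 ≤ n) : IsDer n (phiD n) := by
  rw [isDer_iff]
  intro i j p hi1 hi2 hj1 hj2 hp1 hp2
  simp only [ent_phiD]
  by_cases hc : i + j = p
  · have e1 : p - j = i := by omega
    have e2 : p - i = j := by omega
    rw [e1, e2, if_pos (by omega), if_pos (by omega), if_pos (by omega)]
    push_cast
    ring
  · rw [if_neg (by omega)]
    by_cases h1 : p - j = i
    · -- then j ≥ p, so p - j = 0 = i impossible since i ≥ 1... unless j < p giving contradiction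
      exfalso; omega
    · rw [if_neg (by omega)]
      by_cases h2 : p - i = j
      · exfalso; omega
      · rw [if_neg (by omega)]
        ring

lemma isDer_phi2D {n : ℕ} (hn : 3 ≤ n) : IsDer n (phi2D n) := by
  rw [isDer_iff]
  intro i j p hi1 hi2 hj1 hj2 hp1 hp2
  simp only [ent_phi2D hn]
  split_ifs <;> first | (exfalso; omega) | ring

lemma isDer_phi1D {n : ℕ} (hn : 3 ≤ n) : IsDer n (phi1D n) := by
  rw [isDer_iff]
  intro i j p hi1 hi2 hj1 hj2 hp1 hp2
  simp only [ent_phi1D hn]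
  by_cases hc : i = 1 ∧ j = 1 ∧ p = n
  · obtain ⟨hi, hj, hp⟩ := hc
    subst hi hj hp
    rw [if_neg (by omega), if_pos (by omega), if_pos (by omega)]
    rw [show ((p - 1 : ℕ) : ℂ) = (p : ℂ) - 1 by rw [Nat.cast_sub (by omega)]; norm_num]
    have hp0 : (p : ℂ) ≠ 0 := Nat.cast_ne_zero.mpr (by omega)
    push_cast
    field_simp
    rw [sub_add_cancel, mul_add, mul_div_assoc', mul_div_cancel_left₀ _ hp0]; ring
  · split_ifs <;> first | (exfalso; omega) | ring

section facts
variable {n : ℕ} (hn : 3 ≤ n) {D : V n →ₗ[ℂ] V n} (hM : MasterEq n D)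

include hn hM

lemma below_diag : ∀ s p : ℕ, p < s → ent n D p s = 0 := by
  intro s
  induction s with
  | zero => intro p h; omega
  | succ s ih =>
    intro p hp
    rcases Nat.eq_zero_or_pos p with h0 | h0
    · exact ent_out D _ _ (Or.inl (by omega))
    rcases Nat.eq_zero_or_pos s with hs0 | hs0
    · omega
    by_cases hsn : s + 1 ≤ n
    · have h := hM 1 s p (by omega) (by omega) (by omega) (by omega) (by omega) (by omega)
      have h1 : p - s = 0 := by omega
      rw [h1] at h
      rw [ent_out D 0 1 (Or.inl (by omega))] at h
      rw [ih (p-1) (by omega)] at h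
      simp only [Nat.cast_zero, zero_mul, mul_zero, add_zero, Nat.cast_one, one_mul] at h
      have hs : ((s:ℂ) + 1) ≠ 0 := by
        have : ((s+1 : ℕ) : ℂ) ≠ 0 := Nat.cast_ne_zero.mpr (by omega)
        push_cast at this; exact this
      rw [show 1 + s = s + 1 from by omega] at h
      field_simp at h
      simpa using h
    · exact ent_out D _ _ (Or.inr (by omega))

lemma diag : ∀ s : ℕ, 1 ≤ s → s ≤ n → ent n D s s = (s : ℂ) * ent n D 1 1 := by
  intro s
  induction s with
  | zero => omega
  | succ s ih =>
    intro h1 h2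
    rcases Nat.eq_zero_or_pos s with hs0 | hs0
    · subst hs0; norm_num
    have h := hM s 1 (s+1) (by omega) (by omega) (by omega) (by omega) (by omega) (by omega)
    have e1 : s + 1 - 1 = s := by omega
    have e2 : s + 1 - s = 1 := by omega
    rw [e1, e2] at h
    rw [ih (by omega) (by omega)] at h
    have hs : (s : ℂ) ≠ 0 := Nat.cast_ne_zero.mpr (by omega)
    push_cast at h ⊢
    have h2' : (2:ℂ) ≠ 0 := two_ne_zero
    field_simp at h
    apply mul_left_cancel₀ hs
    linear_combination (s:ℂ) * h
lemma col1 : ∀ t : ℕ, 2 ≤ t → t ≤ n - 2 → ent n D t 1 = 0 := by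
  intro t ht1 ht2
  have eA := hM 1 1 (t+1) (by omega) (by omega) (by omega) (by omega) (by omega) (by omega)
  have eB := hM 1 2 (t+2) (by omega) (by omega) (by omega) (by omega) (by omega) (by omega)
  have eC := hM 2 1 (t+2) (by omega) (by omega) (by omega) (by omega) (by omega) (by omega)
  rw [show t + 1 - 1 = t from by omega] at eA
  rw [show t + 2 - 2 = t from by omega, show t + 2 - 1 = t + 1 from by omega] at eB
  rw [show t + 2 - 1 = t + 1 from by omega, show t + 2 - 2 = t from by omega] at eC
  have hT : (t : ℂ) ≠ 0 := Nat.cast_ne_zero.mpr (by omega)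
  have hT1 : (t : ℂ) + 1 ≠ 0 := by
    have : ((t + 1 : ℕ) : ℂ) ≠ 0 := Nat.cast_ne_zero.mpr (by omega)
    push_cast at this; exact this
  have hT2 : (t : ℂ) + 2 ≠ 0 := by
    have : ((t + 2 : ℕ) : ℂ) ≠ 0 := Nat.cast_ne_zero.mpr (by omega)
    push_cast at this; exact this
  have hT2' : (t : ℂ) + 1 + 1 ≠ 0 := by
    rw [show (t : ℂ) + 1 + 1 = (t : ℂ) + 2 from by ring]; exact hT2
  push_cast at eA eB eC
  field_simp at eA eB eC
  have key : ent n D t 1 * (((t:ℂ) - 1) * (t:ℂ) * ((t:ℂ)^2 + 3*(t:ℂ) - 2)) = 0 := by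
    linear_combination (2*((t:ℂ)+1)) * eB - ((t:ℂ)+2) * eC - ((t:ℂ)^2 + 3*(t:ℂ) - 4) * eA
  have k1 : (t:ℂ) - 1 ≠ 0 := by
    have h := Nat.cast_ne_zero (R := ℂ).mpr (show t - 1 ≠ 0 by omega)
    rw [Nat.cast_sub (by omega)] at h
    simpa using h
  have k3 : (t:ℂ)^2 + 3*(t:ℂ) - 2 ≠ 0 := by
    have h := Nat.cast_ne_zero (R := ℂ).mpr (show t*t + 3*t - 2 ≠ 0 by omega)
    rw [Nat.cast_sub (by omega)] at h
    have : ((t*t + 3*t : ℕ) : ℂ) - ((2:ℕ):ℂ) = (t:ℂ)^2 + 3*(t:ℂ) - 2 := by push_cast; ring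
    rwa [this] at h
  rcases mul_eq_zero.mp key with h | h
  · exact h
  · exact absurd h (by
      exact mul_ne_zero (mul_ne_zero k1 hT) k3)

lemma above : ∀ s p : ℕ, 2 ≤ s → s < p → p ≤ n - 1 → ent n D p s = 0 := by
  intro s
  induction s with
  | zero => intro p h; omega
  | succ s ih =>
    intro p h2 hsp hpn
    have h := hM 1 s p (by omega) (by omega) (by omega) (by omega) (by omega) (by omega)
    rw [col1 hn hM (p - s) (by omega) (by omega)] at h
    by_cases hs1 : s = 1
    · subst hs1
      rw [col1 hn hM (p - 1) (by omega) (by omega)] at h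
      simp only [mul_zero, zero_mul, add_zero, zero_add, Nat.cast_one, one_mul] at h
      have : ((1:ℂ) + 1) ≠ 0 := by norm_num
      field_simp at h
      simpa using h
    · rw [ih (p - 1) (by omega) (by omega) (by omega)] at h
      simp only [mul_zero, zero_mul, add_zero, zero_add, Nat.cast_one, one_mul] at h
      have hs : ((s:ℂ) + 1) ≠ 0 := by
        have : ((s + 1 : ℕ) : ℂ) ≠ 0 := Nat.cast_ne_zero.mpr (by omega)
        push_cast at this; exact this
      rw [show 1 + s = s + 1 from by omega] at h
      field_simp at h
      simpa using h

lemma rowN : ∀ s : ℕ, 3 ≤ s → s ≤ n - 1 → ent n D n s = 0 := by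
  intro s h3 hs
  have h := hM 1 (s - 1) n (by omega) (by omega) (by omega) (by omega) (by omega) (by omega)
  rw [show 1 + (s - 1) = s from by omega] at h
  rw [col1 hn hM (n - (s - 1)) (by omega) (by omega)] at h
  rw [above hn hM (s - 1) (n - 1) (by omega) (by omega) (by omega)] at h
  simp only [mul_zero, zero_mul, add_zero, zero_add, Nat.cast_one, one_mul] at h
  have hs0 : ((s - 1 : ℕ) : ℂ) + 1 ≠ 0 := by
    have : ((s - 1 + 1 : ℕ) : ℂ) ≠ 0 := Nat.cast_ne_zero.mpr (by omega)
    push_cast at this; exact this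
  field_simp at h
  simpa using h

lemma rn2 : (n : ℂ) * ent n D n 2 = ((n : ℂ)^2 - (n : ℂ) + 2) * ent n D (n - 1) 1 := by
  have h := hM 1 1 n (by omega) (by omega) (by omega) (by omega) (by omega) (by omega)
  rw [Nat.cast_sub (by omega : 1 ≤ n)] at h
  rw [show ((n:ℂ) - (1:ℕ) + 1) = (n:ℂ) from by push_cast; ring] at h
  have hn0 : (n : ℂ) ≠ 0 := Nat.cast_ne_zero.mpr (by omega)
  push_cast at h
  field_simp at h
  linear_combination h

end facts

lemma ent_add {n : ℕ} (D₁ D₂ : V n →ₗ[ℂ] V n) (p s : ℕ) :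
    ent n (D₁ + D₂) p s = ent n D₁ p s + ent n D₂ p s := by
  unfold ent; split_ifs <;> simp

lemma ent_smul {n : ℕ} (c : ℂ) (D : V n →ₗ[ℂ] V n) (p s : ℕ) :
    ent n (c • D) p s = c * ent n D p s := by
  unfold ent; split_ifs <;> simp

lemma ext_of_ent {n : ℕ} {D D' : V n →ₗ[ℂ] V n}
    (h : ∀ p s : ℕ, 1 ≤ p → p ≤ n → 1 ≤ s → s ≤ n → ent n D p s = ent n D' p s) :
    D = D' := by
  apply Module.Basis.ext (Pi.basisFun ℂ (Ix n))
  intro s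
  funext p
  have hb : (Pi.basisFun ℂ (Ix n)) s = eV n s := by simp [eV]
  rw [hb]
  have hp := p.2
  have hs := s.2
  simp only [Finset.mem_Icc] at hp hs
  have := h p.1 s.1 hp.1 hp.2 hs.1 hs.2
  rw [ent_eq, ent_eq] at this
  exact this

lemma reconstruct {n : ℕ} (hn : 3 ≤ n) {D : V n →ₗ[ℂ] V n} (hD : IsDer n D) :
    D = ent n D 1 1 • phiD n + (ent n D (n - 1) 1 / (n : ℂ)) • phi1D n
        + ent n D n 1 • phi2D n := by
  have hM := (isDer_iff D).mp hD
  have hn0 : (n : ℂ) ≠ 0 := Nat.cast_ne_zero.mpr (by omega)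
  apply ext_of_ent
  intro p s hp1 hp2 hs1' hs2'
  rw [ent_add, ent_add, ent_smul, ent_smul, ent_smul, ent_phiD, ent_phi1D hn, ent_phi2D hn]
  by_cases hs1 : s = 1
  · subst hs1
    by_cases hp1 : p = 1
    · subst hp1
      rw [if_pos (by omega), if_neg (by omega), if_neg (by omega),
        if_neg (show ¬(1 = 1 ∧ 1 = n) from by omega)]
      push_cast; ring
    · rw [if_neg (by omega)]
      by_cases hpn1 : p = n - 1
      · subst hpn1
        rw [if_pos (by omega), if_neg (by omega)]
        field_simp
        ring
      · rw [if_neg (by omega)]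
        by_cases hpn : p = n
        · subst hpn
          rw [if_neg (by omega), if_pos (by omega)]
          ring
        · rw [if_neg (by omega), if_neg (by omega)]
          rw [col1 hn hM p (by omega) (by omega)]
          ring
  · by_cases hps : p = s
    · subst hps
      rw [if_pos (by omega), if_neg (by omega), if_neg (by omega), if_neg (by omega)]
      rw [diag hn hM p (by omega) (by omega)]
      ring
    · rw [if_neg (by omega), if_neg (by omega)]
      by_cases hlt : p < s
      · rw [below_diag hn hM s p hlt, if_neg (by omega), if_neg (by omega)]
        ring
      · by_cases hpn : p = n
        · subst hpn
          by_cases hs2 : s = 2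
          · subst hs2
            rw [if_pos (by omega), if_neg (by omega)]
            have h2 := rn2 hn hM
            field_simp
            linear_combination h2
          · rw [if_neg (by omega), if_neg (by omega)]
            rw [rowN hn hM s (by omega) (by omega)]
            ring
        · rw [if_neg (by omega), if_neg (by omega)]
          rw [above hn hM s p (by omega) (by omega) (by omega)]
          ring

lemma mulA_zero_left {n : ℕ} (y : V n) : mulA n 0 y = 0 := by
  funext p; simp [mulA]

lemma mulA_zero_right {n : ℕ} (x : V n) : mulA n x 0 = 0 := by
  funext p; simp [mulA]

lemma isDer_zero {n : ℕ} : IsDer n 0 := by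
  intro x y
  simp [mulA_zero_left, mulA_zero_right]

lemma isDer_add {n : ℕ} {D₁ D₂ : V n →ₗ[ℂ] V n} (h₁ : IsDer n D₁) (h₂ : IsDer n D₂) :
    IsDer n (D₁ + D₂) := by
  intro x y
  simp only [LinearMap.add_apply, h₁ x y, h₂ x y, mulA_add_left, mulA_add_right]
  abel

lemma isDer_smul {n : ℕ} (c : ℂ) {D : V n →ₗ[ℂ] V n} (h : IsDer n D) :
    IsDer n (c • D) := by
  intro x y
  simp only [LinearMap.smul_apply, h x y, mulA_smul_left, mulA_smul_right, smul_add]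

lemma ent_zero {n : ℕ} (p s : ℕ) : ent n (0 : V n →ₗ[ℂ] V n) p s = 0 := by
  unfold ent; split_ifs <;> simp

theorem stmt17 (n : ℕ) (hn : 3 ≤ n) :
    {D : V n →ₗ[ℂ] V n | IsDer n D}
      = (Submodule.span ℂ {phiD n, phi1D n, phi2D n} : Submodule ℂ (V n →ₗ[ℂ] V n))
    ∧ LinearIndependent ℂ ![phiD n, phi1D n, phi2D n] := by
  constructor
  · ext D
    simp only [Set.mem_setOf_eq, SetLike.mem_coe]
    constructor
    · intro hD
      rw [reconstruct hn hD]
      refine add_mem (add_mem ?_ ?_) ?_ <;>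
        exact Submodule.smul_mem _ _ (Submodule.subset_span (by simp))
    · intro hD
      refine Submodule.span_induction ?_ ?_ ?_ ?_ hD
      · rintro x (rfl | rfl | rfl)
        · exact isDer_phiD hn
        · exact isDer_phi1D hn
        · exact isDer_phi2D hn
      · exact isDer_zero
      · intro a b _ _ ha hb; exact isDer_add ha hb
      · intro c a _ ha; exact isDer_smul c ha
  · rw [Fintype.linearIndependent_iff]
    intro g hg
    have hsum : g 0 • phiD n + g 1 • phi1D n + g 2 • phi2D n = 0 := by
      have := hg
      rwa [Fin.sum_univ_three] at this
    have key : ∀ p s : ℕ,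
        g 0 * ent n (phiD n) p s + g 1 * ent n (phi1D n) p s + g 2 * ent n (phi2D n) p s = 0 := by
      intro p s
      have := congrArg (fun E => ent n E p s) hsum
      simpa [ent_add, ent_smul, ent_zero] using this
    have h0 : g 0 = 0 := by
      have := key 1 1
      rw [ent_phiD, ent_phi1D hn, ent_phi2D hn] at this
      rw [if_pos (by omega), if_neg (by omega), if_neg (by omega), if_neg (by omega)] at this
      simpa using this
    have h1 : g 1 = 0 := by
      have := key (n - 1) 1
      rw [ent_phiD, ent_phi1D hn, ent_phi2D hn] at this
      rw [if_neg (by omega), if_pos (by omega), if_neg (by omega)] at this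
      have hn0 : (n : ℂ) ≠ 0 := Nat.cast_ne_zero.mpr (by omega)
      rw [h0] at this
      simp only [zero_mul, mul_zero, zero_add, add_zero, mul_one] at this
      exact (mul_eq_zero.mp this).resolve_right hn0
    have h2 : g 2 = 0 := by
      have := key n 1
      rw [ent_phiD, ent_phi1D hn, ent_phi2D hn] at this
      rw [if_neg (by omega), if_neg (by omega), if_neg (by omega), if_pos (by omega)] at this
      rw [h0, h1] at this
      simpa using this
    intro i
    fin_cases i <;> assumption
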